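/- Let H and K be complex Hilbert spaces and f : H →L[ℂ] K a bounded linear map. Then there exist a bounded linear map p : H →L[ℂ] K that is a partial isometry (p ∘ p† ∘ p = p), and self-adjoint bounded operators i : H →L[ℂ] H and j : K →L[ℂ] K, each injective and with dense range, such that f = p ∘ i and f = j ∘ p. (That is, the dagger category of Hilbert spaces and bounded linear maps admits polar decomposition.) -/

import Mathlib

open ContinuousLinearMap

section PolarAux

variable {H : Type*} [NormedAddCommGroup H] [InnerProductSpace ℂ H]
variable {K : Type*} [NormedAddCommGroup K] [InnerProductSpace ℂ K]

/-- choose a preimage under `T` of an element of `range T`. -/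
noncomputable def pdPick (T : H →L[ℂ] H) (y : LinearMap.range (T : H →ₗ[ℂ] H)) : H :=
  (LinearMap.mem_range.mp y.2).choose

lemma pdPick_spec (T : H →L[ℂ] H) (y : LinearMap.range (T : H →ₗ[ℂ] H)) : T (pdPick T y) = ↑y :=
  (LinearMap.mem_range.mp y.2).choose_spec

lemma pd_key (f : H →L[ℂ] K) (T : H →L[ℂ] H) (hn : ∀ x, ‖f x‖ = ‖T x‖)
    {x y : H} (h : T x = T y) : f x = f y := by
  have h0 : ‖f x - f y‖ = 0 := by
    rw [← map_sub, hn, map_sub, h, sub_self, norm_zero]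
  rwa [norm_eq_zero, sub_eq_zero] at h0

/-- the densely defined isometry `T x ↦ f x` on `range T`. -/
noncomputable def pdV0 (f : H →L[ℂ] K) (T : H →L[ℂ] H) (hn : ∀ x, ‖f x‖ = ‖T x‖) :
    LinearMap.range (T : H →ₗ[ℂ] H) →L[ℂ] K :=
  LinearMap.mkContinuous
    { toFun := fun y => f (pdPick T y)
      map_add' := fun y z => by
        have h : f (pdPick T (y + z)) = f (pdPick T y + pdPick T z) :=
          pd_key f T hn (by simp [pdPick_spec])
        show f (pdPick T (y + z)) = f (pdPick T y) + f (pdPick T z)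
        rw [h, map_add]
      map_smul' := fun c y => by
        have h : f (pdPick T (c • y)) = f (c • pdPick T y) :=
          pd_key f T hn (by simp [pdPick_spec])
        show f (pdPick T (c • y)) = c • f (pdPick T y)
        rw [h, map_smul] }
    1 (fun y => by
      simp only [LinearMap.coe_mk, AddHom.coe_mk, one_mul]
      rw [hn, pdPick_spec]; exact le_of_eq rfl)

lemma pdV0_apply (f : H →L[ℂ] K) (T : H →L[ℂ] H) (hn : ∀ x, ‖f x‖ = ‖T x‖)
    (x : H) (h : T x ∈ LinearMap.range (T : H →ₗ[ℂ] H)) : pdV0 f T hn ⟨T x, h⟩ = f x :=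
  pd_key f T hn (pdPick_spec T ⟨T x, h⟩)

lemma pdV0_norm (f : H →L[ℂ] K) (T : H →L[ℂ] H) (hn : ∀ x, ‖f x‖ = ‖T x‖)
    (y : LinearMap.range (T : H →ₗ[ℂ] H)) : ‖pdV0 f T hn y‖ = ‖y‖ := by
  show ‖f (pdPick T y)‖ = ‖y‖
  rw [hn, pdPick_spec]
  rfl

end PolarAux

lemma pd_denseRange {E : Type*} [NormedAddCommGroup E] [InnerProductSpace ℂ E] [CompleteSpace E]
    (g : E →L[ℂ] E) (hg : ContinuousLinearMap.adjoint g = g) (h0 : Function.Injective g) :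
    DenseRange g := by
  have hbot : (LinearMap.range (g : E →ₗ[ℂ] E))ᗮ = ⊥ := by
    ext y
    simp only [Submodule.mem_bot]
    constructor
    · intro hy
      have hall : ∀ w, (inner ℂ w (g y) : ℂ) = 0 := by
        intro w
        calc (inner ℂ w (g y) : ℂ) = inner ℂ ((ContinuousLinearMap.adjoint g) w) y :=
              (ContinuousLinearMap.adjoint_inner_left g y w).symm
          _ = inner ℂ (g w) y := by rw [hg]
          _ = 0 := hy _ ⟨w, rfl⟩
      have := hall (g y)
      rw [inner_self_eq_zero] at this
      have : g y = g 0 := by rw [this, map_zero]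
      exact h0 this
    · rintro rfl; exact Submodule.zero_mem _
  have htop : (LinearMap.range (g : E →ₗ[ℂ] E)).topologicalClosure = ⊤ := by
    rw [← Submodule.orthogonal_orthogonal_eq_closure, hbot, Submodule.bot_orthogonal_eq_top]
  have hd : Dense ((LinearMap.range (g : E →ₗ[ℂ] E) : Submodule ℂ E) : Set E) :=
    Submodule.dense_iff_topologicalClosure_eq_top.mpr htop
  rwa [LinearMap.coe_range, ContinuousLinearMap.coe_coe] at hd

set_option maxHeartbeats 2000000 in
set_option synthInstance.maxHeartbeats 1000000 in

/-- The dagger category of complex Hilbert spaces and bounded linear maps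
admits polar decomposition: every `f : H →L[ℂ] K` factors as `f = p ∘ i = j ∘ p` where `p`
is a partial isometry (`p ∘ p† ∘ p = p`) and `i`, `j` are self-adjoint bimorphisms
(injective with dense range). -/
theorem hilb_admits_polar_decomposition
    {H : Type*} [NormedAddCommGroup H] [InnerProductSpace ℂ H] [CompleteSpace H]
    {K : Type*} [NormedAddCommGroup K] [InnerProductSpace ℂ K] [CompleteSpace K]
    (f : H →L[ℂ] K) :
    ∃ (p : H →L[ℂ] K) (i : H →L[ℂ] H) (j : K →L[ℂ] K),
      p.comp ((ContinuousLinearMap.adjoint p).comp p) = p ∧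
      ContinuousLinearMap.adjoint i = i ∧ ContinuousLinearMap.adjoint j = j ∧
      Function.Injective i ∧ DenseRange i ∧
      Function.Injective j ∧ DenseRange j ∧
      f = p.comp i ∧ f = j.comp p := by
  classical
  -- the absolute value `T = √(f† f)`
  have ha : 0 ≤ (adjoint f) ∘L f := by
    rw [ContinuousLinearMap.nonneg_iff_isPositive]
    simpa using! (ContinuousLinearMap.isPositive_one (E := K)).adjoint_conj f
  set T : H →L[ℂ] H := CFC.sqrt ((adjoint f) ∘L f) with hTdef
  have hTnn : (0 : H →L[ℂ] H) ≤ T := CFC.sqrt_nonneg _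
  have hTsa : IsSelfAdjoint T := IsSelfAdjoint.of_nonneg hTnn
  have hTT : T ∘L T = adjoint f ∘L f := by
    have := CFC.sqrt_mul_sqrt_self ((adjoint f) ∘L f) ha
    simpa [ContinuousLinearMap.mul_def] using this
  have hadj : adjoint T = T := hTsa
  have hn : ∀ x, ‖f x‖ = ‖T x‖ := by
    intro x
    have h1 : (inner ℂ (f x) (f x) : ℂ) = inner ℂ (T x) (T x) := by
      rw [← ContinuousLinearMap.adjoint_inner_right f,
        show (adjoint f) (f x) = (T ∘L T) x by rw [hTT]; rfl,
        ContinuousLinearMap.comp_apply]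
      nth_rewrite 1 [← hadj]
      rw [ContinuousLinearMap.adjoint_inner_right]
    have h3 : ‖f x‖ ^ 2 = ‖T x‖ ^ 2 := by
      rw [← inner_self_eq_norm_sq (𝕜 := ℂ), ← inner_self_eq_norm_sq (𝕜 := ℂ), h1]
    nlinarith [norm_nonneg (f x), norm_nonneg (T x)]
  -- the closure of the range of `T`
  set M : Submodule ℂ H := (LinearMap.range (T : H →ₗ[ℂ] H)).topologicalClosure with hMdef
  have hMclosed : IsClosed (M : Set H) := Submodule.isClosed_topologicalClosure _
  haveI : CompleteSpace M := hMclosed.completeSpace_coe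
  have hrange_le : LinearMap.range (T : H →ₗ[ℂ] H) ≤ M := Submodule.le_topologicalClosure _
  -- the inclusion of `range T` into `M`
  set e : LinearMap.range (T : H →ₗ[ℂ] H) →L[ℂ] M :=
    ContinuousLinearMap.codRestrict (LinearMap.range (T : H →ₗ[ℂ] H)).subtypeL M
      (fun x => hrange_le x.2) with hedef
  have he_norm : ∀ y, ‖e y‖ = ‖y‖ := fun y => rfl
  have he_iso : Isometry e := AddMonoidHomClass.isometry_of_norm e he_norm
  have he_dense : DenseRange e := by
    intro m
    rw [Metric.mem_closure_iff]
    intro ε hε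
    have hm : (m : H) ∈ closure (LinearMap.range (T : H →ₗ[ℂ] H) : Set H) := by
      rw [← Submodule.topologicalClosure_coe]; exact m.2
    rw [Metric.mem_closure_iff] at hm
    obtain ⟨y, hy, hyd⟩ := hm ε hε
    refine ⟨e ⟨y, hy⟩, Set.mem_range_self _, ?_⟩
    rw [Subtype.dist_eq]
    exact hyd
  -- extend `T x ↦ f x` to `M`
  set v1 : M →L[ℂ] K := (pdV0 f T hn).extend e with hv1def
  have hv1e : ∀ y, v1 (e y) = pdV0 f T hn y := fun y =>
    ContinuousLinearMap.extend_eq (f := pdV0 f T hn) (e := e) he_dense he_iso.isUniformInducing y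
  have hv1norm : ∀ m, ‖v1 m‖ = ‖m‖ := by
    have hcl : IsClosed {m : M | ‖v1 m‖ = ‖m‖} :=
      isClosed_eq (continuous_norm.comp v1.continuous) continuous_norm
    intro m
    refine he_dense.induction_on m hcl ?_
    intro y
    rw [hv1e, pdV0_norm, he_norm]
  set v1i : M →ₗᵢ[ℂ] K := ⟨v1.toLinearMap, hv1norm⟩ with hv1idef
  -- the partial isometry
  set p : H →L[ℂ] K := v1 ∘L (M.orthogonalProjectionOnto) with hpdef
  have hpT : ∀ x, p (T x) = f x := by
    intro x
    have hmem : T x ∈ M := hrange_le ⟨x, rfl⟩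
    have hproj : M.orthogonalProjectionOnto (T x) = ⟨T x, hmem⟩ :=
      Submodule.orthogonalProjectionOnto_mem_subspace_eq_self (⟨T x, hmem⟩ : M)
    have heq : (⟨T x, hmem⟩ : M) = e ⟨T x, ⟨x, rfl⟩⟩ := rfl
    rw [ContinuousLinearMap.comp_apply, hproj, heq, hv1e]; exact pdV0_apply f T hn x _
  have hp_perp : ∀ x ∈ Mᗮ, p x = 0 := by
    intro x hx
    rw [ContinuousLinearMap.comp_apply,
      Submodule.orthogonalProjectionOnto_apply_of_mem_orthogonal hx, map_zero]
  -- `adjoint p ∘ p` is the orthogonal projection onto `M`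
  set Q : H →L[ℂ] H := M.subtypeL ∘L M.orthogonalProjectionOnto with hQdef
  have hpQ : (adjoint p).comp p = Q := by
    ext x
    apply ext_inner_right ℂ
    intro y
    rw [ContinuousLinearMap.comp_apply, ContinuousLinearMap.adjoint_inner_left]
    have h1 : (inner ℂ (p x) (p y) : ℂ) =
        inner ℂ (M.orthogonalProjectionOnto x) (M.orthogonalProjectionOnto y) := by
      have := v1i.inner_map_map (M.orthogonalProjectionOnto x) (M.orthogonalProjectionOnto y)
      exact this
    rw [h1]
    have h2 : (inner ℂ (M.orthogonalProjectionOnto x) (M.orthogonalProjectionOnto y) : ℂ) =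
        inner ℂ ((M.orthogonalProjectionOnto x : H)) ((M.orthogonalProjectionOnto y : H)) := rfl
    rw [h2]
    have h3 : (inner ℂ ((M.orthogonalProjectionOnto x : H)) (y - (M.orthogonalProjectionOnto y : H)) : ℂ)
        = 0 := by
      have hmem := Submodule.sub_starProjection_mem_orthogonal (K := M) y
      exact hmem _ (M.orthogonalProjectionOnto x).2
    have h4 : (inner ℂ ((M.orthogonalProjectionOnto x : H)) ((M.orthogonalProjectionOnto y : H)) : ℂ)
        = inner ℂ ((M.orthogonalProjectionOnto x : H)) y := by
      have := inner_sub_right (𝕜 := ℂ) ((M.orthogonalProjectionOnto x : H)) y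
        ((M.orthogonalProjectionOnto y : H))
      rw [h3] at this
      exact (sub_eq_zero.mp this.symm).symm
    rw [h4]
    rfl
  have hQ_proj : ∀ x, p (Q x) = p x := by
    intro x
    rw [hQdef, ContinuousLinearMap.comp_apply, hpdef, ContinuousLinearMap.comp_apply,
      ContinuousLinearMap.comp_apply]
    congr 1
    exact Submodule.orthogonalProjectionOnto_mem_subspace_eq_self _
  have hpartial : p.comp ((adjoint p).comp p) = p := by
    rw [hpQ]; ext x; exact hQ_proj x
  -- kernel of `T` is `Mᗮ`
  have hMperp : Mᗮ = (LinearMap.range (T : H →ₗ[ℂ] H))ᗮ := by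
    rw [hMdef, ← Submodule.orthogonal_orthogonal_eq_closure,
      Submodule.orthogonal_orthogonal_eq_closure (K := (LinearMap.range (T : H →ₗ[ℂ] H))ᗮ),
      (Submodule.isClosed_orthogonal _).submodule_topologicalClosure_eq]
  have hker : ∀ x, T x = 0 ↔ x ∈ Mᗮ := by
    intro x
    rw [hMperp]
    constructor
    · intro h
      intro u hu
      obtain ⟨w, rfl⟩ := hu
      calc (inner ℂ (T w) x : ℂ) = inner ℂ ((adjoint T) w) x := by rw [hadj]
        _ = inner ℂ w (T x) := ContinuousLinearMap.adjoint_inner_left T x w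
        _ = 0 := by rw [h, inner_zero_right]
    · intro h
      have hall : ∀ w, (inner ℂ w (T x) : ℂ) = 0 := by
        intro w
        calc (inner ℂ w (T x) : ℂ) = inner ℂ ((adjoint T) w) x :=
              (ContinuousLinearMap.adjoint_inner_left T x w).symm
          _ = inner ℂ (T w) x := by rw [hadj]
          _ = 0 := h _ ⟨w, rfl⟩
      have := hall (T x)
      rwa [inner_self_eq_zero] at this
  have hf_perp : ∀ x ∈ Mᗮ, f x = 0 := by
    intro x hx
    have : ‖f x‖ = 0 := by rw [hn, (hker x).mpr hx, norm_zero]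
    rwa [norm_eq_zero] at this
  -- the self-adjoint bimorphism `i`
  haveI : CompleteSpace ↥Mᗮ := (Submodule.isClosed_orthogonal _).completeSpace_coe
  set Q' : H →L[ℂ] H := Mᗮ.subtypeL ∘L Mᗮ.orthogonalProjectionOnto with hQ'def
  have hQ'adj : adjoint Q' = Q' := isSelfAdjoint_starProjection Mᗮ
  set i : H →L[ℂ] H := T + Q' with hidef
  have hisa : adjoint i = i := by rw [hidef, map_add, hadj, hQ'adj]
  have hQ'mem : ∀ x, Q' x ∈ Mᗮ := fun x => (Mᗮ.orthogonalProjectionOnto x).2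
  have hi0 : ∀ x, i x = 0 → x = 0 := by
    intro x hx
    have hTx : T x ∈ M := hrange_le ⟨x, rfl⟩
    have hxs : T x + Q' x = 0 := hx
    have h1 : (inner ℂ (T x) (T x + Q' x) : ℂ) = inner ℂ (T x) (T x) := by
      rw [inner_add_right, Submodule.inner_right_of_mem_orthogonal hTx (hQ'mem x), add_zero]
    rw [hxs, inner_zero_right] at h1
    have hT0 : T x = 0 := by rwa [eq_comm, inner_self_eq_zero] at h1
    have hxperp : x ∈ Mᗮ := (hker x).mp hT0
    have hQ'x : Q' x = x := by
      rw [hQ'def, ContinuousLinearMap.comp_apply]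
      have : Mᗮ.orthogonalProjectionOnto x = ⟨x, hxperp⟩ :=
        Submodule.orthogonalProjectionOnto_mem_subspace_eq_self (⟨x, hxperp⟩ : Mᗮ)
      rw [this]; rfl
    rw [hT0, hQ'x, zero_add] at hxs
    exact hxs
  have hiinj : Function.Injective i := by
    intro a b hab
    have := hi0 (a - b) (by rw [map_sub, hab, sub_self])
    rwa [sub_eq_zero] at this
  have hfi : ∀ x, p (i x) = f x := by
    intro x
    have : i x = T x + Q' x := rfl
    rw [this, map_add, hpT, hp_perp _ (hQ'mem x), add_zero]
  -- the self-adjoint bimorphism `j`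
  set N : Submodule ℂ K := LinearMap.range (p : H →ₗ[ℂ] K) with hNdef
  have hrangev1 : Set.range p = Set.range v1 := by
    ext z
    constructor
    · rintro ⟨x, rfl⟩; exact ⟨M.orthogonalProjectionOnto x, rfl⟩
    · rintro ⟨m, rfl⟩
      refine ⟨(m : H), ?_⟩
      show v1 (M.orthogonalProjectionOnto (m : H)) = v1 m
      rw [Submodule.orthogonalProjectionOnto_mem_subspace_eq_self]
  have hNclosed : IsClosed (N : Set K) := by
    rw [hNdef, LinearMap.coe_range, ContinuousLinearMap.coe_coe, hrangev1]
    exact v1i.isometry.isClosedEmbedding.isClosed_range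
  haveI : CompleteSpace N := hNclosed.completeSpace_coe
  haveI : CompleteSpace ↥Nᗮ := (Submodule.isClosed_orthogonal _).completeSpace_coe
  set R : K →L[ℂ] K := Nᗮ.subtypeL ∘L Nᗮ.orthogonalProjectionOnto with hRdef
  have hRadj : adjoint R = R := isSelfAdjoint_starProjection Nᗮ
  set j : K →L[ℂ] K := (p ∘L (T ∘L adjoint p)) + R with hjdef
  have hjsa : adjoint j = j := by
    rw [hjdef, map_add, hRadj, ContinuousLinearMap.adjoint_comp,
      ContinuousLinearMap.adjoint_comp, ContinuousLinearMap.adjoint_adjoint, hadj,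
      ContinuousLinearMap.comp_assoc]
  have hQapp : ∀ x, (adjoint p) (p x) = Q x := by
    intro x
    have := congrArg (fun (g : H →L[ℂ] H) => g x) hpQ
    simpa using this
  have hTQ : ∀ x, T (Q x) = T x := by
    intro x
    have hmem : x - Q x ∈ Mᗮ := Submodule.sub_starProjection_mem_orthogonal (K := M) x
    have h0 : T (x - Q x) = 0 := (hker _).mpr hmem
    rw [map_sub, sub_eq_zero] at h0
    exact h0.symm
  have hRmem : ∀ y, R y ∈ Nᗮ := fun y => (Nᗮ.orthogonalProjectionOnto y).2
  have hRN : ∀ y ∈ N, R y = 0 := by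
    intro y hy
    have hmem : y ∈ Nᗮᗮ := Submodule.le_orthogonal_orthogonal N hy
    rw [hRdef, ContinuousLinearMap.comp_apply,
      Submodule.orthogonalProjectionOnto_apply_of_mem_orthogonal hmem, map_zero]
  have hjp : ∀ x, j (p x) = f x := by
    intro x
    have : j (p x) = p (T ((adjoint p) (p x))) + R (p x) := rfl
    rw [this, hQapp, hTQ, hpT, hRN (p x) ⟨x, rfl⟩, add_zero]
  have hj0 : ∀ y, j y = 0 → y = 0 := by
    intro y hy
    set a : K := p (T ((adjoint p) y)) with hadef
    have haN : a ∈ N := ⟨_, rfl⟩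
    have hab : a + R y = 0 := hy
    have h1 : (inner ℂ a (a + R y) : ℂ) = inner ℂ a a := by
      rw [inner_add_right, Submodule.inner_right_of_mem_orthogonal haN (hRmem y), add_zero]
    rw [hab, inner_zero_right] at h1
    have ha0 : a = 0 := by rwa [eq_comm, inner_self_eq_zero] at h1
    have hb0 : R y = 0 := by rwa [ha0, zero_add] at hab
    have hyN : y ∈ Nᗮᗮ := by
      have hsub : y - ((Nᗮ.orthogonalProjectionOnto y : Nᗮ) : K) ∈ Nᗮᗮ :=
          Submodule.sub_starProjection_mem_orthogonal (K := Nᗮ) y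
      have hRy : ((Nᗮ.orthogonalProjectionOnto y : Nᗮ) : K) = R y := rfl
      rwa [hRy, hb0, sub_zero] at hsub
    rw [Submodule.orthogonal_orthogonal] at hyN
    obtain ⟨z, rfl⟩ := hyN
    have ha' : a = f z := by
      rw [hadef]; show p (T ((adjoint p) (p z))) = f z; rw [hQapp, hTQ, hpT]
    have hfz : f z = 0 := by rw [← ha', ha0]
    have hTz : T z = 0 := by
      have hnz := hn z
      rw [hfz, norm_zero] at hnz
      exact norm_eq_zero.mp hnz.symm
    exact hp_perp z ((hker z).mp hTz)
  have hjinj : Function.Injective j := by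
    intro a b hab
    have := hj0 (a - b) (by rw [map_sub, hab, sub_self])
    rwa [sub_eq_zero] at this
  refine ⟨p, i, j, hpartial, hisa, hjsa, hiinj, pd_denseRange i hisa hiinj,
    hjinj, pd_denseRange j hjsa hjinj, ?_, ?_⟩
  · ext x; exact (hfi x).symm
  · ext x; exact (hjp x).symm
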